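/- Let H be a finite index subgroup of a finitely generated free group F_n and let θ_H : F_n → H^{ab} be the transfer map. Then θ_H sends visible elements of F_n to visible elements of H^{ab}. -/

import Mathlib

open Subgroup Subgroup.leftTransversals MulAction Multiplicative

section Cocycle

variable {n : ℕ} (H : Subgroup (FreeGroup (Fin n)))

private lemma mext {Q : Type*} {a b : Multiplicative (Q → ℤ)}
    (h : ∀ q, a.toAdd q = b.toAdd q) : a = b :=
  Multiplicative.toAdd.injective (funext h)

/-- The action of the free group on integer-valued functions on the coset space. -/
noncomputable def myAct : FreeGroup (Fin n) →* MulAut (Multiplicative (FreeGroup (Fin n) ⧸ H → ℤ)) where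
  toFun g :=
    { toFun := fun a => ofAdd fun q => a.toAdd (g⁻¹ • q)
      invFun := fun a => ofAdd fun q => a.toAdd (g • q)
      left_inv := fun a => mext fun q => by simp
      right_inv := fun a => by refine mext fun q => ?_; simp
      map_mul' := fun a b => rfl }
  map_one' := MulEquiv.ext fun a => mext fun q => by simp
  map_mul' := fun g h => MulEquiv.ext fun a => mext fun q => by simp [mul_smul]

variable (f : FreeGroup (Fin n) →* Multiplicative ℤ)

open scoped Classical in
/-- The cocycle, packaged as a hom to the semidirect product. -/
noncomputable def myCoc :
    FreeGroup (Fin n) →*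
      Multiplicative (FreeGroup (Fin n) ⧸ H → ℤ) ⋊[myAct H] FreeGroup (Fin n) :=
  FreeGroup.lift fun i =>
    ⟨ofAdd (fun q => if q = (((1 : FreeGroup (Fin n)) : FreeGroup (Fin n) ⧸ H))
        then (f (FreeGroup.of i)).toAdd else 0), FreeGroup.of i⟩

lemma myCoc_right (g : FreeGroup (Fin n)) : (myCoc H f g).right = g := by
  have : (SemidirectProduct.rightHom.comp (myCoc H f)) = MonoidHom.id _ := by
    ext i
    simp [myCoc]
  exact DFunLike.congr_fun this g

/-- The underlying cocycle function. -/
noncomputable def cval (g : FreeGroup (Fin n)) : FreeGroup (Fin n) ⧸ H → ℤ :=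
  ((myCoc H f g).left).toAdd

lemma cval_mul (g h : FreeGroup (Fin n)) (q : FreeGroup (Fin n) ⧸ H) :
    cval H f (g * h) q = cval H f g q + cval H f h (g⁻¹ • q) := by
  simp only [cval, map_mul, SemidirectProduct.mul_left, myCoc_right]
  rfl

lemma cval_one (q : FreeGroup (Fin n) ⧸ H) : cval H f (1 : FreeGroup (Fin n)) q = 0 := by
  simp only [cval, map_one, SemidirectProduct.one_left]
  rfl

lemma cval_inv (g : FreeGroup (Fin n)) (q : FreeGroup (Fin n) ⧸ H) :
    cval H f g⁻¹ q = - cval H f g (g • q) := by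
  have h0 := cval_mul H f g g⁻¹ (g • q)
  rw [mul_inv_cancel, cval_one, inv_smul_smul] at h0
  linarith

open scoped Classical in
lemma cval_of (i : Fin n) (q : FreeGroup (Fin n) ⧸ H) :
    cval H f (FreeGroup.of i) q =
      if q = (((1 : FreeGroup (Fin n)) : FreeGroup (Fin n) ⧸ H))
        then (f (FreeGroup.of i)).toAdd else 0 := by
  simp [cval, myCoc]

lemma sum_cval [H.FiniteIndex] (g : FreeGroup (Fin n)) :
    letI := H.fintypeQuotientOfFiniteIndex
    ∑ q : FreeGroup (Fin n) ⧸ H, cval H f g q = (f g).toAdd := by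
  classical
  letI := H.fintypeQuotientOfFiniteIndex
  let E : FreeGroup (Fin n) →* Multiplicative ℤ :=
    { toFun := fun g => ofAdd (∑ q : FreeGroup (Fin n) ⧸ H, cval H f g q)
      map_one' := by simp [cval_one]
      map_mul' := fun g h => by
        have : (∑ q : FreeGroup (Fin n) ⧸ H, cval H f (g * h) q)
            = (∑ q : FreeGroup (Fin n) ⧸ H, cval H f g q)
              + ∑ q : FreeGroup (Fin n) ⧸ H, cval H f h q := by
          simp only [cval_mul H f g h]
          rw [Finset.sum_add_distrib]
          congr 1
          exact Equiv.sum_comp (MulAction.toPerm (g⁻¹ : FreeGroup (Fin n))) (cval H f h)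
        simp [this, ofAdd_add] }
  have hE : E = f := by
    ext i
    show ofAdd (∑ q : FreeGroup (Fin n) ⧸ H, cval H f (FreeGroup.of i) q) = _
    have : (∑ q : FreeGroup (Fin n) ⧸ H, cval H f (FreeGroup.of i) q)
        = (f (FreeGroup.of i)).toAdd := by
      rw [Finset.sum_congr rfl fun q _ => cval_of H f i q]
      simp
    rw [this]
    rfl
  have h1 : E g = f g := by rw [hE]
  exact congrArg Multiplicative.toAdd h1

/-- Membership in `H` fixes the base coset. -/
lemma mem_smul_base {h : FreeGroup (Fin n)} (hh : h ∈ H) :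
    h • (((1 : FreeGroup (Fin n)) : FreeGroup (Fin n) ⧸ H)) = ((1 : FreeGroup (Fin n)) : FreeGroup (Fin n) ⧸ H) := by
  rw [MulAction.Quotient.smul_mk, smul_eq_mul, mul_one]
  exact QuotientGroup.eq.mpr (by simpa using inv_mem hh)

/-- The homomorphism `H → ℤ` given by evaluating the cocycle at the base coset. -/
noncomputable def phiH : H →* Multiplicative ℤ where
  toFun h := ofAdd (cval H f h (((1 : FreeGroup (Fin n)) : FreeGroup (Fin n) ⧸ H)))
  map_one' := by simp [cval_one]
  map_mul' := fun h₁ h₂ => by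
    show ofAdd (cval H f ((h₁ : FreeGroup (Fin n)) * (h₂ : FreeGroup (Fin n))) _) = _
    rw [← ofAdd_add, cval_mul, mem_smul_base H (inv_mem h₁.2)]

lemma smul_base (g : FreeGroup (Fin n)) :
    g • (((1 : FreeGroup (Fin n)) : FreeGroup (Fin n) ⧸ H)) = (g : FreeGroup (Fin n) ⧸ H) := by
  rw [MulAction.Quotient.smul_mk, smul_eq_mul, mul_one]

lemma transfer_phiH [H.FiniteIndex] (w : FreeGroup (Fin n)) :
    MonoidHom.transfer (phiH H f) w = f w := by
  classical
  letI := H.fintypeQuotientOfFiniteIndex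
  set T : H.LeftTransversal := Inhabited.default with hT
  rw [MonoidHom.transfer_def (phiH H f) T w]
  rw [diff]
  have key : ∀ q : FreeGroup (Fin n) ⧸ H,
      (phiH H f)
        ⟨(T.2.leftQuotientEquiv q : FreeGroup (Fin n))⁻¹ *
          ((w • T).2.leftQuotientEquiv q : FreeGroup (Fin n)),
            QuotientGroup.leftRel_apply.mp <| Quotient.exact' <|
              ((T.2.leftQuotientEquiv).symm_apply_apply q).trans
              (((w • T).2.leftQuotientEquiv).symm_apply_apply q).symm⟩
        = ofAdd (cval H f w q
            + cval H f (T.2.leftQuotientEquiv (w⁻¹ • q) : FreeGroup (Fin n)) (w⁻¹ • q)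
            - cval H f (T.2.leftQuotientEquiv q : FreeGroup (Fin n)) q) := by
    intro q
    have hβ : ((w • T).2.leftQuotientEquiv q : FreeGroup (Fin n))
        = w * (T.2.leftQuotientEquiv (w⁻¹ • q) : FreeGroup (Fin n)) := by
      rw [smul_apply_eq_smul_apply_inv_smul w T q, smul_eq_mul]
    show ofAdd (cval H f ((T.2.leftQuotientEquiv q : FreeGroup (Fin n))⁻¹ *
      ((w • T).2.leftQuotientEquiv q : FreeGroup (Fin n)))
      (((1 : FreeGroup (Fin n)) : FreeGroup (Fin n) ⧸ H))) = _
    rw [hβ]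
    set t : FreeGroup (Fin n) := (T.2.leftQuotientEquiv q : FreeGroup (Fin n)) with ht
    set s : FreeGroup (Fin n) := (T.2.leftQuotientEquiv (w⁻¹ • q) : FreeGroup (Fin n)) with hs
    have htq : t • (((1 : FreeGroup (Fin n)) : FreeGroup (Fin n) ⧸ H)) = q := by
      rw [smul_base]
      exact T.2.quotientGroupMk_leftQuotientEquiv q
    congr 1
    rw [cval_mul, cval_inv, inv_inv, htq, cval_mul]
    ring
  rw [Finset.prod_congr rfl fun q _ => key q]
  rw [← ofAdd_sum]
  have hsum : (∑ q : FreeGroup (Fin n) ⧸ H,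
      (cval H f w q
        + cval H f (T.2.leftQuotientEquiv (w⁻¹ • q) : FreeGroup (Fin n)) (w⁻¹ • q)
        - cval H f (T.2.leftQuotientEquiv q : FreeGroup (Fin n)) q))
      = (f w).toAdd := by
    have h2 : (∑ q : FreeGroup (Fin n) ⧸ H,
        cval H f (T.2.leftQuotientEquiv (w⁻¹ • q) : FreeGroup (Fin n)) (w⁻¹ • q))
        = ∑ q : FreeGroup (Fin n) ⧸ H,
        cval H f (T.2.leftQuotientEquiv q : FreeGroup (Fin n)) q :=
      Equiv.sum_comp (MulAction.toPerm (w⁻¹ : FreeGroup (Fin n)))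
        (fun q => cval H f (T.2.leftQuotientEquiv q : FreeGroup (Fin n)) q)
    rw [Finset.sum_sub_distrib, Finset.sum_add_distrib, h2, sum_cval]
    ring
  rw [hsum]
  simp

end Cocycle

section MapTransfer

variable {G : Type*} [Group G] {H : Subgroup G} {A B : Type*} [CommGroup A] [CommGroup B]

lemma map_diff (ψ : A →* B) (ϕ : H →* A) (S T : H.LeftTransversal) [H.FiniteIndex] :
    ψ (diff ϕ S T) = diff (ψ.comp ϕ) S T := by
  rw [diff, diff, map_prod]
  rfl

lemma map_transfer (ψ : A →* B) (ϕ : H →* A) [H.FiniteIndex] (g : G) :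
    ψ (MonoidHom.transfer ϕ g) = MonoidHom.transfer (ψ.comp ϕ) g := by
  rw [MonoidHom.transfer_def ϕ Inhabited.default g,
    MonoidHom.transfer_def (ψ.comp ϕ) Inhabited.default g, map_diff]

end MapTransfer

/-- `R` is a retract of the ambient group: there is an endomorphism with image `R`
restricting to the identity on `R` (equivalently, an idempotent endomorphism with image `R`). -/
def IsRetract {G : Type*} [Group G] (R : Subgroup G) : Prop :=
  ∃ r : G →* G, r.range = R ∧ ∀ x ∈ R, r x = x

/-- The subgroup `H` is free of rank `m`. -/
def HasFreeRank {G : Type*} [Group G] (H : Subgroup G) (m : ℕ) : Prop :=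
  ∃ φ : FreeGroup (Fin m) →* G, Function.Injective φ ∧ φ.range = H

/-- An element of a (finitely generated free or free abelian) group is *visible* if some
homomorphism to `ℤ` sends it to `1`; equivalently, its image in the abelianization is part
of a basis (has coprime coordinates). -/
def IsVisibleElement {G : Type*} [Group G] (g : G) : Prop :=
  ∃ f : G →* Multiplicative ℤ, f g = Multiplicative.ofAdd 1

theorem transfer_visible {n : ℕ} (hn : 2 ≤ n) (H : Subgroup (FreeGroup (Fin n)))
    [H.FiniteIndex] (w : FreeGroup (Fin n)) (hw : IsVisibleElement w) :
    IsVisibleElement ((MonoidHom.transfer (Abelianization.of : H →* Abelianization H)) w) := by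
  obtain ⟨f, hf⟩ := hw
  refine ⟨Abelianization.lift (phiH H f), ?_⟩
  have hcomp : (Abelianization.lift (phiH H f)).comp (Abelianization.of : H →* Abelianization H)
      = phiH H f := by
    ext x
    simp
  rw [map_transfer, hcomp, transfer_phiH, hf]
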